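/- arXiv:0707.3878 — 2 statements merged into one kernel-verified Lean document; each statement's English description precedes it below -/
import Mathlib

section
/- Let C₁, C₂ ⊆ 𝔽₂ⁿ be binary codes both containing the zero vector, and let C = {(u | u+v) : u ∈ C₁, v ∈ C₂} be their Plotkin construction. Then Ker(C) = {(x | x+y) : x ∈ Ker(C₁), y ∈ Ker(C₂)}, where Ker(D) = {x : D + x = D} denotes the kernel of a code D. -/
def plotkin {n : ℕ} (C₁ C₂ : Set (Fin n → ZMod 2)) : Set (Fin (n + n) → ZMod 2) :=
  {w | ∃ u ∈ C₁, ∃ v ∈ C₂, w = Fin.append u (u + v)}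

def ker {m : ℕ} (C : Set (Fin m → ZMod 2)) : Set (Fin m → ZMod 2) :=
  {x | (x + ·) '' C = C}

lemma addSelf {m : ℕ} (x : Fin m → ZMod 2) : x + x = 0 := by
  funext i; exact CharTwo.add_self_eq_zero _

lemma mem_ker_iff {m : ℕ} {C : Set (Fin m → ZMod 2)} {x : Fin m → ZMod 2} :
    x ∈ ker C ↔ ∀ c ∈ C, x + c ∈ C := by
  constructor
  · intro h c hc
    have : x + c ∈ (x + ·) '' C := ⟨c, hc, rfl⟩
    rwa [h] at this
  · intro h
    apply Set.Subset.antisymm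
    · rintro _ ⟨c, hc, rfl⟩; exact h c hc
    · intro c hc
      refine ⟨x + c, h c hc, ?_⟩
      show x + (x + c) = c
      rw [← add_assoc, addSelf, zero_add]

lemma append_add {n : ℕ} (u v x y : Fin n → ZMod 2) :
    Fin.append (u + x) (v + y) = Fin.append u v + Fin.append x y := by
  funext i
  simp only [Pi.add_apply, Fin.append, Fin.addCases, eq_rec_constant]
  split <;> rfl

lemma append_zero_zero {n : ℕ} :
    Fin.append (0 : Fin n → ZMod 2) 0 = (0 : Fin (n + n) → ZMod 2) := by
  funext i
  simp only [Fin.append, Fin.addCases, eq_rec_constant]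
  split <;> rfl

lemma append_inj {n : ℕ} {a b c d : Fin n → ZMod 2}
    (h : Fin.append a b = Fin.append c d) : a = c ∧ b = d := by
  constructor
  · funext i
    have := congrFun h (Fin.castAdd n i)
    rwa [Fin.append_left, Fin.append_left] at this
  · funext i
    have := congrFun h (Fin.natAdd n i)
    rwa [Fin.append_right, Fin.append_right] at this

theorem plotkin_ker {n : ℕ} (C₁ C₂ : Set (Fin n → ZMod 2))
    (h₁ : (0 : Fin n → ZMod 2) ∈ C₁) (h₂ : (0 : Fin n → ZMod 2) ∈ C₂) :
    ker (plotkin C₁ C₂) =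
      {w | ∃ x ∈ ker C₁, ∃ y ∈ ker C₂, w = Fin.append x (x + y)} := by
  ext w
  constructor
  · intro hw
    rw [mem_ker_iff] at hw
    have h0 : (0 : Fin (n+n) → ZMod 2) ∈ plotkin C₁ C₂ :=
      ⟨0, h₁, 0, h₂, by rw [add_zero, append_zero_zero]⟩
    have hww : w ∈ plotkin C₁ C₂ := by
      have := hw 0 h0
      rwa [add_zero] at this
    obtain ⟨u, hu, v, hv, rfl⟩ := hww
    have hker1 : u ∈ ker C₁ := by
      rw [mem_ker_iff]
      intro a ha
      have hc : Fin.append a a ∈ plotkin C₁ C₂ := ⟨a, ha, 0, h₂, by rw [add_zero]⟩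
      have := hw _ hc
      rw [← append_add] at this
      obtain ⟨u', hu', v', hv', heq⟩ := this
      obtain ⟨e1, -⟩ := append_inj heq
      rw [e1]; exact hu'
    have hker2 : v ∈ ker C₂ := by
      rw [mem_ker_iff]
      intro b hb
      have hc : Fin.append (0 : Fin n → ZMod 2) b ∈ plotkin C₁ C₂ :=
        ⟨0, h₁, b, hb, by rw [zero_add]⟩
      have := hw _ hc
      rw [← append_add] at this
      obtain ⟨u', hu', v', hv', heq⟩ := this
      obtain ⟨e1, e2⟩ := append_inj heq
      rw [add_zero] at e1
      rw [← e1, add_assoc] at e2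
      have hv'' : v + b = v' := add_left_cancel e2
      rw [hv'']; exact hv'
    exact ⟨u, hker1, v, hker2, rfl⟩
  · rintro ⟨x, hx, y, hy, rfl⟩
    rw [mem_ker_iff]
    rintro _ ⟨u, hu, v, hv, rfl⟩
    rw [← append_add]
    refine ⟨x + u, mem_ker_iff.mp hx u hu, y + v, mem_ker_iff.mp hy v hv, ?_⟩
    abel
end

section
/- Let C₁, C₂ ⊆ 𝔽₂ⁿ be binary codes containing the zero vector and C their Plotkin construction. Then dim(Ker(C)) = dim(Ker(C₁)) + dim(Ker(C₂)). -/
namespace PlotkinAux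

lemma z2 : ∀ a b : ZMod 2, a + (a + b) = b := by decide

lemma z3 : ∀ p q r : ZMod 2, p + 0 + (q + (0 + (p + q + r))) = r := by decide

lemma add_self {m : ℕ} (x : Fin m → ZMod 2) : x + x = 0 := by
  funext i
  have : ∀ a : ZMod 2, a + a = 0 := by decide
  exact this _

lemma mem_ker_iff {m : ℕ} {C : Set (Fin m → ZMod 2)} {x : Fin m → ZMod 2} :
    x ∈ ker C ↔ ∀ u, u ∈ C ↔ x + u ∈ C := by
  constructor
  · intro h u
    constructor
    · intro hu
      have : x + u ∈ (x + ·) '' C := ⟨u, hu, rfl⟩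
      rwa [h] at this
    · intro hu
      have : x + (x + u) ∈ (x + ·) '' C := ⟨x + u, hu, rfl⟩
      rw [h] at this
      rwa [← add_assoc, add_self, zero_add] at this
  · intro h
    ext w
    constructor
    · rintro ⟨u, hu, rfl⟩; exact (h u).1 hu
    · intro hw
      refine ⟨x + w, (h w).1 hw, ?_⟩
      show x + (x + w) = w
      rw [← add_assoc, add_self, zero_add]

/-- The kernel of any binary code is a linear subspace. -/
def kerSub {m : ℕ} (C : Set (Fin m → ZMod 2)) : Submodule (ZMod 2) (Fin m → ZMod 2) where
  carrier := ker C
  zero_mem' := by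
    show ((0 : Fin m → ZMod 2) + ·) '' C = C
    simp
  add_mem' := by
    intro a b ha hb
    show ((a + b) + ·) '' C = C
    have : ((a + b) + ·) = (a + ·) ∘ (b + ·) := by funext w; simp [add_assoc]
    rw [this, Set.image_comp]
    rw [show ((b + ·) '' C) = C from hb]
    exact ha
  smul_mem' := by
    intro c x hx
    have hc : c = 0 ∨ c = 1 := by revert c; decide
    rcases hc with rfl | rfl
    · show ((0 : ZMod 2) • x + ·) '' C = C
      simp
    · show ((1 : ZMod 2) • x + ·) '' C = C
      rw [one_smul]; exact hx

lemma span_ker {m : ℕ} (C : Set (Fin m → ZMod 2)) :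
    Submodule.span (ZMod 2) (ker C) = kerSub C :=
  Submodule.span_eq (kerSub C)

variable {n : ℕ}

lemma funext_append {α : Type*} {f g : Fin (n + n) → α}
    (h1 : ∀ i, f (Fin.castAdd n i) = g (Fin.castAdd n i))
    (h2 : ∀ i, f (Fin.natAdd n i) = g (Fin.natAdd n i)) : f = g := by
  funext i
  exact Fin.addCases (fun i => h1 i) (fun i => h2 i) i

/-- The Plotkin map `(a, c) ↦ (a | a + c)` as a linear map. -/
def appendMap (n : ℕ) :
    ((Fin n → ZMod 2) × (Fin n → ZMod 2)) →ₗ[ZMod 2] (Fin (n + n) → ZMod 2) where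
  toFun p := Fin.append p.1 (p.1 + p.2)
  map_add' p q := by
    refine funext_append (fun i => ?_) (fun i => ?_) <;>
      simp only [Fin.append_left, Fin.append_right, Pi.add_apply, Prod.fst_add,
        Prod.snd_add] <;> ring
  map_smul' r p := by
    refine funext_append (fun i => ?_) (fun i => ?_) <;>
      simp only [Fin.append_left, Fin.append_right, Pi.add_apply, Pi.smul_apply,
        Prod.smul_fst, Prod.smul_snd, RingHom.id_apply, smul_eq_mul] <;> ring

lemma appendMap_injective : Function.Injective (appendMap n) := by
  intro p q h
  have h' : Fin.append p.1 (p.1 + p.2) = Fin.append q.1 (q.1 + q.2) := h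
  have h1 : p.1 = q.1 := by
    funext i
    have := congrFun h' (Fin.castAdd n i)
    simpa only [Fin.append_left] using this
  have h2 : p.2 = q.2 := by
    funext i
    have := congrFun h' (Fin.natAdd n i)
    simp only [Fin.append_right, Pi.add_apply, h1] at this
    exact add_left_cancel this
  exact Prod.ext h1 h2

lemma left_mem {C₁ C₂ : Set (Fin n → ZMod 2)} {w : Fin (n + n) → ZMod 2}
    (hw : w ∈ plotkin C₁ C₂) : (fun i => w (Fin.castAdd n i)) ∈ C₁ := by
  obtain ⟨u, hu, v, hv, rfl⟩ := hw
  simpa only [Fin.append_left] using hu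

lemma right_mem {C₁ C₂ : Set (Fin n → ZMod 2)} {w : Fin (n + n) → ZMod 2}
    (hw : w ∈ plotkin C₁ C₂) :
    (fun i => w (Fin.castAdd n i) + w (Fin.natAdd n i)) ∈ C₂ := by
  obtain ⟨u, hu, v, hv, rfl⟩ := hw
  simpa only [Fin.append_left, Fin.append_right, Pi.add_apply, z2] using hv

lemma step {C₁ C₂ : Set (Fin n → ZMod 2)} {a c : Fin n → ZMod 2}
    (ha : a ∈ ker C₁) (hc : c ∈ ker C₂) {w : Fin (n + n) → ZMod 2}
    (hw : w ∈ plotkin C₁ C₂) : Fin.append a (a + c) + w ∈ plotkin C₁ C₂ := by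
  obtain ⟨u, hu, v, hv, rfl⟩ := hw
  refine ⟨a + u, (mem_ker_iff.1 ha u).1 hu, c + v, (mem_ker_iff.1 hc v).1 hv, ?_⟩
  refine funext_append (fun i => ?_) (fun i => ?_) <;>
    simp only [Fin.append_left, Fin.append_right, Pi.add_apply] <;> ring

lemma ker_plotkin (C₁ C₂ : Set (Fin n → ZMod 2))
    (h₁ : (0 : Fin n → ZMod 2) ∈ C₁) (h₂ : (0 : Fin n → ZMod 2) ∈ C₂) :
    kerSub (plotkin C₁ C₂) =
      Submodule.map (appendMap n) ((kerSub C₁).prod (kerSub C₂)) := by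
  ext x
  simp only [Submodule.mem_map, Submodule.mem_prod]
  constructor
  · intro hx
    have H := mem_ker_iff.1 hx
    have haK : (fun i => x (Fin.castAdd n i)) ∈ ker C₁ := by
      rw [mem_ker_iff]
      intro u
      constructor
      · intro hu
        have hw : Fin.append u (u + 0) ∈ plotkin C₁ C₂ := ⟨u, hu, 0, h₂, rfl⟩
        have h3 := left_mem ((H _).1 hw)
        simp only [Pi.add_apply, Fin.append_left, add_zero] at h3
        exact h3
      · intro hu
        have hw : Fin.append ((fun i => x (Fin.castAdd n i)) + u)
            (((fun i => x (Fin.castAdd n i)) + u) + 0) ∈ plotkin C₁ C₂ := ⟨_, hu, 0, h₂, rfl⟩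
        have h3 := left_mem ((H _).1 hw)
        simp only [Pi.add_apply, Fin.append_left, add_zero, z2] at h3
        exact h3
    have hcK : (fun i => x (Fin.castAdd n i) + x (Fin.natAdd n i)) ∈ ker C₂ := by
      rw [mem_ker_iff]
      intro v
      constructor
      · intro hv
        have hw : Fin.append (0 : Fin n → ZMod 2) ((0 : Fin n → ZMod 2) + v) ∈ plotkin C₁ C₂ :=
          ⟨0, h₁, v, hv, rfl⟩
        have h3 := right_mem ((H _).1 hw)
        simp only [Pi.add_apply, Fin.append_left, Fin.append_right, Pi.zero_apply, add_zero,
          zero_add, ← add_assoc] at h3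
        exact h3
      · intro hv
        have hw : Fin.append (0 : Fin n → ZMod 2) ((0 : Fin n → ZMod 2) +
            ((fun i => x (Fin.castAdd n i) + x (Fin.natAdd n i)) + v)) ∈ plotkin C₁ C₂ :=
          ⟨0, h₁, _, hv, rfl⟩
        have h3 := right_mem ((H _).1 hw)
        simp only [Pi.add_apply, Fin.append_left, Fin.append_right, Pi.zero_apply, z3] at h3
        exact h3
    refine ⟨(fun i => x (Fin.castAdd n i), fun i => x (Fin.castAdd n i) + x (Fin.natAdd n i)),
      ⟨haK, hcK⟩, ?_⟩
    show Fin.append _ _ = x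
    refine funext_append (fun i => ?_) (fun i => ?_)
    · simp only [Fin.append_left]
    · simp only [Fin.append_right, Pi.add_apply, z2]
  · rintro ⟨⟨a, c⟩, ⟨haK, hcK⟩, rfl⟩
    show Fin.append a (a + c) ∈ ker (plotkin C₁ C₂)
    rw [mem_ker_iff]
    intro w
    constructor
    · exact step haK hcK
    · intro hw
      have := step haK hcK hw
      rwa [← add_assoc, add_self, zero_add] at this

/-- A product of submodules is linearly equivalent to the product of the submodules. -/
def prodSubEquiv {R M N : Type*} [CommRing R] [AddCommGroup M] [AddCommGroup N]
    [Module R M] [Module R N] (p : Submodule R M) (q : Submodule R N) :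
    ↥(p.prod q) ≃ₗ[R] ↥p × ↥q where
  toFun x := (⟨x.1.1, x.2.1⟩, ⟨x.1.2, x.2.2⟩)
  invFun y := ⟨(y.1.1, y.2.1), ⟨y.1.2, y.2.2⟩⟩
  left_inv _ := rfl
  right_inv _ := rfl
  map_add' _ _ := rfl
  map_smul' _ _ := rfl

end PlotkinAux

open PlotkinAux in
theorem plotkin_dim_ker {n : ℕ} (C₁ C₂ : Set (Fin n → ZMod 2))
    (h₁ : (0 : Fin n → ZMod 2) ∈ C₁) (h₂ : (0 : Fin n → ZMod 2) ∈ C₂) :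
    Module.finrank (ZMod 2) (Submodule.span (ZMod 2) (ker (plotkin C₁ C₂))) =
      Module.finrank (ZMod 2) (Submodule.span (ZMod 2) (ker C₁)) +
      Module.finrank (ZMod 2) (Submodule.span (ZMod 2) (ker C₂)) := by
  rw [span_ker, span_ker, span_ker, ker_plotkin C₁ C₂ h₁ h₂]
  rw [← LinearEquiv.finrank_eq
    (Submodule.equivMapOfInjective (appendMap n) appendMap_injective
      ((kerSub C₁).prod (kerSub C₂)))]
  rw [LinearEquiv.finrank_eq (prodSubEquiv (kerSub C₁) (kerSub C₂))]
  exact Module.finrank_prod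
end
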